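/- Let w ∈ ℂ with w ≠ 0 and w² ≠ 1, and fix r₁, r₂ ∈ ℂ with r₁² = 1 + w and r₂² = 1 − w (note r₁, r₂ ≠ 0). Set A₁ := 1/(2r₁) + 1/(2·i·r₂) and A₂ := 1/(2r₁) − 1/(2·i·r₂). Then for all x, y ∈ ℂ, writing f := (A₁x + A₂y)/√2 and g := (A₂x + A₁y)/√2, one has f² + 2w·f·g + g² = x·y. -/

import Mathlib

theorem stmt_0 (w r₁ r₂ A₁ A₂ : ℂ) (hw : w ≠ 0) (hw2 : w ^ 2 ≠ 1)
    (hr₁ : r₁ ^ 2 = 1 + w) (hr₂ : r₂ ^ 2 = 1 - w)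
    (hA₁ : A₁ = 1 / (2 * r₁) + 1 / (2 * Complex.I * r₂))
    (hA₂ : A₂ = 1 / (2 * r₁) - 1 / (2 * Complex.I * r₂))
    (x y : ℂ) :
    ((A₁ * x + A₂ * y) / (Real.sqrt 2 : ℂ)) ^ 2
      + 2 * w * ((A₁ * x + A₂ * y) / (Real.sqrt 2 : ℂ))
          * ((A₂ * x + A₁ * y) / (Real.sqrt 2 : ℂ))
      + ((A₂ * x + A₁ * y) / (Real.sqrt 2 : ℂ)) ^ 2 = x * y := by
  have hI : Complex.I ≠ 0 := Complex.I_ne_zero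
  have hr1 : r₁ ≠ 0 := by
    intro h
    apply hw2
    have h1 : (0:ℂ) = 1 + w := by rw [← hr₁, h]; ring
    have hwv : w = -1 := by linear_combination -h1
    rw [hwv]; ring
  have hr2 : r₂ ≠ 0 := by
    intro h
    apply hw2
    have h1 : (0:ℂ) = 1 - w := by rw [← hr₂, h]; ring
    have hwv : w = 1 := by linear_combination h1
    rw [hwv]; ring
  have hs : ((Real.sqrt 2 : ℝ) : ℂ) ^ 2 = 2 := by
    norm_cast
    rw [Real.sq_sqrt]; norm_num
  have hM : 4 * Complex.I * r₁ * r₂ ≠ 0 := by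
    simp [hI, hr1, hr2]
  have e1 : A₁ * (4 * Complex.I * r₁ * r₂) = 2 * Complex.I * r₂ + 2 * r₁ := by
    rw [hA₁]; field_simp; ring
  have e2 : A₂ * (4 * Complex.I * r₁ * r₂) = 2 * Complex.I * r₂ - 2 * r₁ := by
    rw [hA₂]; field_simp; ring
  have t1 : (A₁ ^ 2 + A₂ ^ 2 + 2 * w * A₁ * A₂) * (4 * Complex.I * r₁ * r₂) ^ 2 = 0 := by
    linear_combination
      (A₁ * (4 * Complex.I * r₁ * r₂) + (2 * Complex.I * r₂ + 2 * r₁)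
        + 2 * w * (A₂ * (4 * Complex.I * r₁ * r₂))) * e1
      + (A₂ * (4 * Complex.I * r₁ * r₂) + (2 * Complex.I * r₂ - 2 * r₁)
        + 2 * w * (2 * Complex.I * r₂ + 2 * r₁)) * e2
      + (8 - 8 * w) * hr₁ - (8 + 8 * w) * hr₂ + (8 + 8 * w) * r₂ ^ 2 * Complex.I_sq
  have t2 : (2 * A₁ * A₂ + w * (A₁ ^ 2 + A₂ ^ 2)) * (4 * Complex.I * r₁ * r₂) ^ 2
      = (4 * Complex.I * r₁ * r₂) ^ 2 := by
    linear_combination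
      (2 * (A₂ * (4 * Complex.I * r₁ * r₂))
        + w * (A₁ * (4 * Complex.I * r₁ * r₂) + (2 * Complex.I * r₂ + 2 * r₁))) * e1
      + (2 * (2 * Complex.I * r₂ + 2 * r₁)
        + w * (A₂ * (4 * Complex.I * r₁ * r₂) + (2 * Complex.I * r₂ - 2 * r₁))) * e2
      + (16 * r₂ ^ 2 + 8 * w - 8) * hr₁ + (8 + 8 * w) * hr₂
      + ((8 + 8 * w) * r₂ ^ 2 - 16 * r₁ ^ 2 * r₂ ^ 2) * Complex.I_sq
  have key1 : A₁ ^ 2 + A₂ ^ 2 + 2 * w * A₁ * A₂ = 0 :=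
    by
      rcases mul_eq_zero.mp t1 with h | h
      · exact h
      · exact absurd h (pow_ne_zero 2 hM)
  have key2 : 2 * A₁ * A₂ + w * (A₁ ^ 2 + A₂ ^ 2) = 1 :=
    mul_right_cancel₀ (pow_ne_zero 2 hM) (by rw [one_mul]; exact t2)
  have H : (A₁ * x + A₂ * y) ^ 2 + 2 * w * (A₁ * x + A₂ * y) * (A₂ * x + A₁ * y)
      + (A₂ * x + A₁ * y) ^ 2 = 2 * (x * y) := by
    linear_combination (x ^ 2 + y ^ 2) * key1 + 2 * x * y * key2
  calc ((A₁ * x + A₂ * y) / (Real.sqrt 2 : ℂ)) ^ 2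
      + 2 * w * ((A₁ * x + A₂ * y) / (Real.sqrt 2 : ℂ))
          * ((A₂ * x + A₁ * y) / (Real.sqrt 2 : ℂ))
      + ((A₂ * x + A₁ * y) / (Real.sqrt 2 : ℂ)) ^ 2
      = ((A₁ * x + A₂ * y) ^ 2 + 2 * w * (A₁ * x + A₂ * y) * (A₂ * x + A₁ * y)
          + (A₂ * x + A₁ * y) ^ 2) / ((Real.sqrt 2 : ℝ) : ℂ) ^ 2 := by ring
    _ = 2 * (x * y) / ((Real.sqrt 2 : ℝ) : ℂ) ^ 2 := by rw [H]
    _ = x * y := by rw [hs]; ring
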